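/- arXiv:1207.7160 — 3 statements merged into one kernel-verified Lean document; each statement's English description precedes it below -/
import Mathlib

section
/- Let x* be a global minimizer of g(x) = ‖x − x̂‖² subject to quadratic equality constraints f_k(x) = 0. If there exist λ_k ∈ ℝ with (i) ∇g(x*) + ∑ λ_k ∇f_k(x*) = 0 and (ii) I + ∑ λ_k H_k ⪰ 0, then the semidefinite relaxation is exact: the optimal value of the SDP min ⟨G, Y⟩ subject to ⟨F_k, Y⟩ = 0, ⟨E, Y⟩ = 1, Y ⪰ 0 equals g(x*). -/
open Matrix

lemma quadForm_blocks {n : ℕ} (A : Matrix (Fin n) (Fin n) ℝ) (bv : Fin n → ℝ) (c : ℝ)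
    (z : Fin n → ℝ) (t : ℝ) :
    (Sum.elim z (fun _ : Unit => t)) ⬝ᵥ
      (Matrix.fromBlocks A (Matrix.of fun i (_ : Unit) => bv i)
        (Matrix.of fun (_ : Unit) j => bv j) (Matrix.of fun _ _ => c)) *ᵥ
      (Sum.elim z (fun _ : Unit => t)) =
    z ⬝ᵥ A *ᵥ z + 2 * t * (bv ⬝ᵥ z) + t * t * c := by
  simp only [Matrix.mulVec, dotProduct, Fintype.sum_sum_type,
    Matrix.fromBlocks_apply₁₁, Matrix.fromBlocks_apply₁₂, Matrix.fromBlocks_apply₂₁,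
    Matrix.fromBlocks_apply₂₂, Matrix.of_apply, Sum.elim_inl, Sum.elim_inr,
    Finset.univ_unique, Finset.sum_const, Finset.card_singleton, one_smul, smul_eq_mul,
    Finset.sum_add_distrib, Finset.mul_sum, mul_add, add_mul]
  have e1 : ∑ x, z x * (bv x * t) = ∑ x, t * (bv x * z x) :=
    Finset.sum_congr rfl fun x _ => by ring
  have e2 : ∑ x : Fin n, 2 * t * (bv x * z x)
      = ∑ x, t * (bv x * z x) + ∑ x, t * (bv x * z x) := by
    rw [← Finset.sum_add_distrib]; exact Finset.sum_congr rfl fun x _ => by ring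
  rw [e1, e2]; ring

lemma trace_mul_vecMulVec {ι : Type*} [Fintype ι] (F : Matrix ι ι ℝ) (u : ι → ℝ) :
    Matrix.trace (F * Matrix.vecMulVec u u) = u ⬝ᵥ F *ᵥ u := by
  simp only [Matrix.trace, Matrix.diag, Matrix.mul_apply, Matrix.vecMulVec_apply,
    Matrix.mulVec, dotProduct, Finset.mul_sum]
  exact Finset.sum_congr rfl fun x _ => Finset.sum_congr rfl fun j _ => by ring

lemma trace_mul_nonneg' {ι : Type*} [Fintype ι] [DecidableEq ι] {M Y : Matrix ι ι ℝ}
    (hM : M.PosSemidef) (hY : Y.PosSemidef) : 0 ≤ Matrix.trace (M * Y) := by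
  obtain ⟨B, rfl⟩ : ∃ B : Matrix ι ι ℝ, M = Bᴴ * B := by
    open scoped MatrixOrder in exact CStarAlgebra.nonneg_iff_eq_star_mul_self.mp hM.nonneg
  obtain ⟨C, rfl⟩ : ∃ C : Matrix ι ι ℝ, Y = Cᴴ * C := by
    open scoped MatrixOrder in exact CStarAlgebra.nonneg_iff_eq_star_mul_self.mp hY.nonneg
  have h : Matrix.trace (Bᴴ * B * (Cᴴ * C)) = Matrix.trace ((C * Bᴴ)ᴴ * (C * Bᴴ)) := by
    rw [Matrix.mul_assoc, Matrix.trace_mul_comm, Matrix.conjTranspose_mul,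
      Matrix.conjTranspose_conjTranspose]
    simp only [Matrix.mul_assoc]
  rw [h]
  simp only [Matrix.trace, Matrix.diag, Matrix.mul_apply, Matrix.conjTranspose_apply,
    RCLike.star_def, starRingEnd_apply, star_trivial]
  exact Finset.sum_nonneg fun i _ => Finset.sum_nonneg fun j _ => mul_self_nonneg _

lemma psd_vecMulVec {ι : Type*} [Fintype ι] [DecidableEq ι] (u : ι → ℝ) :
    (Matrix.vecMulVec u u).PosSemidef := by
  rw [Matrix.vecMulVec_eq Unit]
  have h : Matrix.replicateCol Unit u = (Matrix.replicateRow Unit u)ᴴ := by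
    ext i j; simp [Matrix.replicateCol, Matrix.replicateRow]
  rw [h]
  exact Matrix.posSemidef_conjTranspose_mul_self _

lemma sum_mulVec {ι κ : Type*} [Fintype ι] [Fintype κ] (s : Finset κ)
    (N : κ → Matrix ι ι ℝ) (v : ι → ℝ) :
    (∑ k ∈ s, N k) *ᵥ v = ∑ k ∈ s, N k *ᵥ v := by
  ext i
  simp only [Matrix.mulVec, dotProduct, Finset.sum_apply, Matrix.sum_apply,
    Finset.sum_mul]
  rw [Finset.sum_comm]

lemma dot_symm {n : ℕ} {A : Matrix (Fin n) (Fin n) ℝ} (hA : A.IsSymm) (a c : Fin n → ℝ) :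
    a ⬝ᵥ A *ᵥ c = c ⬝ᵥ A *ᵥ a := by
  rw [Matrix.dotProduct_mulVec, ← Matrix.mulVec_transpose, hA.eq, dotProduct_comm]


section helper
lemma sum_dotProduct' {ι κ : Type*} [Fintype ι] (s : Finset κ) (v : κ → ι → ℝ) (w : ι → ℝ) :
    (∑ k ∈ s, v k) ⬝ᵥ w = ∑ k ∈ s, v k ⬝ᵥ w := by
  simp only [dotProduct, Finset.sum_apply, Finset.sum_mul]
  exact Finset.sum_comm

lemma dotProduct_sum' {ι κ : Type*} [Fintype ι] (s : Finset κ) (w : ι → ℝ) (v : κ → ι → ℝ) :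
    w ⬝ᵥ (∑ k ∈ s, v k) = ∑ k ∈ s, w ⬝ᵥ v k := by
  simp only [dotProduct, Finset.sum_apply, Finset.mul_sum]
  exact Finset.sum_comm
end helper

theorem sdp_relaxation_exact_of_certificate
    (n m : ℕ) (xhat : Fin n → ℝ)
    (H : Fin m → Matrix (Fin n) (Fin n) ℝ)
    (b : Fin m → Fin n → ℝ) (β : Fin m → ℝ)
    (hH : ∀ k, (H k).IsSymm)
    (g : (Fin n → ℝ) → ℝ) (f : Fin m → (Fin n → ℝ) → ℝ)
    (hg : ∀ x, g x = (x - xhat) ⬝ᵥ (x - xhat))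
    (hf : ∀ k x, f k x = x ⬝ᵥ (H k).mulVec x + 2 * (b k ⬝ᵥ x) + β k)
    (G : Matrix (Fin n ⊕ Unit) (Fin n ⊕ Unit) ℝ)
    (F : Fin m → Matrix (Fin n ⊕ Unit) (Fin n ⊕ Unit) ℝ)
    (E : Matrix (Fin n ⊕ Unit) (Fin n ⊕ Unit) ℝ)
    (hG : G = Matrix.fromBlocks 1
      (Matrix.of fun i (_ : Unit) => -xhat i)
      (Matrix.of fun (_ : Unit) j => -xhat j)
      (Matrix.of fun _ _ => xhat ⬝ᵥ xhat))
    (hF : ∀ k, F k = Matrix.fromBlocks (H k)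
      (Matrix.of fun i (_ : Unit) => b k i)
      (Matrix.of fun (_ : Unit) j => b k j)
      (Matrix.of fun _ _ => β k))
    (hE : E = Matrix.fromBlocks 0 0 0 1)
    (xs : Fin n → ℝ) (lam : Fin m → ℝ)
    (hfeas : ∀ k, f k xs = 0)
    (hmin : ∀ x : Fin n → ℝ, (∀ k, f k x = 0) → g xs ≤ g x)
    (hgrad : (xs - xhat) + ∑ k, lam k • ((H k).mulVec xs + b k) = 0)
    (hpsd : ((1 : Matrix (Fin n) (Fin n) ℝ) + ∑ k, lam k • H k).PosSemidef) :
    IsLeast {v : ℝ | ∃ Y : Matrix (Fin n ⊕ Unit) (Fin n ⊕ Unit) ℝ,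
      Y.PosSemidef ∧ (∀ k, Matrix.trace (F k * Y) = 0) ∧
      Matrix.trace (E * Y) = 1 ∧ v = Matrix.trace (G * Y)} (g xs) := by
  classical
  -- quadratic form values of the block matrices
  have qG : ∀ (z : Fin n → ℝ) (t : ℝ),
      (Sum.elim z (fun _ : Unit => t)) ⬝ᵥ G *ᵥ (Sum.elim z (fun _ : Unit => t)) =
      z ⬝ᵥ z - 2 * t * (xhat ⬝ᵥ z) + t * t * (xhat ⬝ᵥ xhat) := by
    intro z t
    rw [hG, quadForm_blocks (1 : Matrix (Fin n) (Fin n) ℝ) (fun i => -xhat i)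
      (xhat ⬝ᵥ xhat) z t]
    simp only [Matrix.one_mulVec, dotProduct, Finset.mul_sum]
    rw [show ∑ i, 2 * t * ((fun i => -xhat i) i * z i) = -∑ i, 2 * t * (xhat i * z i) by
      rw [← Finset.sum_neg_distrib]; exact Finset.sum_congr rfl fun i _ => by ring]
    ring
  have qF : ∀ (k : Fin m) (z : Fin n → ℝ) (t : ℝ),
      (Sum.elim z (fun _ : Unit => t)) ⬝ᵥ F k *ᵥ (Sum.elim z (fun _ : Unit => t)) =
      z ⬝ᵥ H k *ᵥ z + 2 * t * (b k ⬝ᵥ z) + t * t * β k := by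
    intro k z t
    rw [hF k, quadForm_blocks (H k) (b k) (β k) z t]
  have qE : ∀ (z : Fin n → ℝ) (t : ℝ),
      (Sum.elim z (fun _ : Unit => t)) ⬝ᵥ E *ᵥ (Sum.elim z (fun _ : Unit => t)) = t * t := by
    intro z t
    have hE' : E = Matrix.fromBlocks (0 : Matrix (Fin n) (Fin n) ℝ)
      (Matrix.of fun i (_ : Unit) => (fun _ : Fin n => (0:ℝ)) i)
      (Matrix.of fun (_ : Unit) j => (fun _ : Fin n => (0:ℝ)) j)
      (Matrix.of fun _ _ => (1:ℝ)) := by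
      rw [hE]; congr 1 <;> ext i j <;> simp [Matrix.one_apply, Subsingleton.elim i j]
    rw [hE', quadForm_blocks]
    simp [dotProduct]
  -- scalar certificates
  have hsy : ∀ (k : Fin m) (a c : Fin n → ℝ), a ⬝ᵥ H k *ᵥ c = c ⬝ᵥ H k *ᵥ a :=
    fun k => dot_symm (hH k)
  have h1 : ∀ z : Fin n → ℝ, xs ⬝ᵥ z - xhat ⬝ᵥ z +
      (∑ k, lam k * (xs ⬝ᵥ H k *ᵥ z) + ∑ k, lam k * (b k ⬝ᵥ z)) = 0 := by
    intro z
    have h := congrArg (fun w => w ⬝ᵥ z) hgrad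
    simp only [add_dotProduct, sub_dotProduct, zero_dotProduct,
      sum_dotProduct', smul_dotProduct, smul_eq_mul, mul_add,
      Finset.sum_add_distrib] at h
    have e : ∀ k : Fin m, (H k *ᵥ xs) ⬝ᵥ z = xs ⬝ᵥ H k *ᵥ z := fun k => by
      rw [dotProduct_comm, hsy k z xs]
    simp only [e] at h
    linarith [h]
  have h3 : ∑ k, lam k * (xs ⬝ᵥ H k *ᵥ xs) + 2 * ∑ k, lam k * (b k ⬝ᵥ xs)
      + ∑ k, lam k * β k = 0 := by
    have h : ∑ k, lam k * f k xs = 0 := by simp [hfeas]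
    simp only [hf] at h
    rw [show ∑ k, lam k * (xs ⬝ᵥ H k *ᵥ xs + 2 * (b k ⬝ᵥ xs) + β k)
        = ∑ k, (lam k * (xs ⬝ᵥ H k *ᵥ xs) + 2 * (lam k * (b k ⬝ᵥ xs)) + lam k * β k) from
      Finset.sum_congr rfl fun k _ => by ring] at h
    simp only [Finset.sum_add_distrib] at h
    rw [← Finset.mul_sum] at h
    linarith [h]
  have hgxs : g xs = xs ⬝ᵥ xs - 2 * (xhat ⬝ᵥ xs) + xhat ⬝ᵥ xhat := by
    rw [hg]
    simp only [sub_dotProduct, dotProduct_sub]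
    rw [dotProduct_comm xs xhat]
    ring
  -- the certificate matrix
  set M : Matrix (Fin n ⊕ Unit) (Fin n ⊕ Unit) ℝ :=
    G + ∑ k, lam k • F k - g xs • E with hM
  -- quadratic form of M is the PSD form of A := 1 + ∑ lam • H at z - t • xs
  have qM : ∀ (z : Fin n → ℝ) (t : ℝ),
      (Sum.elim z (fun _ : Unit => t)) ⬝ᵥ M *ᵥ (Sum.elim z (fun _ : Unit => t)) =
      (z - t • xs) ⬝ᵥ ((1 : Matrix (Fin n) (Fin n) ℝ) + ∑ k, lam k • H k) *ᵥ (z - t • xs) := by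
    intro z t
    set v := Sum.elim z (fun _ : Unit => t) with hv
    have lhs : v ⬝ᵥ M *ᵥ v = v ⬝ᵥ G *ᵥ v + ∑ k, lam k * (v ⬝ᵥ F k *ᵥ v)
        - g xs * (v ⬝ᵥ E *ᵥ v) := by
      rw [hM]
      rw [Matrix.sub_mulVec, Matrix.add_mulVec, _root_.sum_mulVec]
      simp only [Matrix.smul_mulVec, dotProduct_sub, dotProduct_add,
        dotProduct_sum', dotProduct_smul, smul_eq_mul]
    have rhs : (z - t • xs) ⬝ᵥ ((1 : Matrix (Fin n) (Fin n) ℝ) + ∑ k, lam k • H k)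
        *ᵥ (z - t • xs)
        = (z - t • xs) ⬝ᵥ (z - t • xs) + ∑ k, lam k * ((z - t • xs) ⬝ᵥ H k *ᵥ (z - t • xs)) := by
      rw [Matrix.add_mulVec, _root_.sum_mulVec, Matrix.one_mulVec]
      simp only [Matrix.smul_mulVec, dotProduct_add, dotProduct_sum',
        dotProduct_smul, smul_eq_mul]
    rw [lhs, rhs, qG, qE]
    simp only [hv, qF]
    -- expand (z - t•xs) dot products
    have ew : (z - t • xs) ⬝ᵥ (z - t • xs)
        = z ⬝ᵥ z - 2 * t * (xs ⬝ᵥ z) + t * t * (xs ⬝ᵥ xs) := by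
      simp only [sub_dotProduct, dotProduct_sub, smul_dotProduct,
        dotProduct_smul, smul_eq_mul]
      rw [dotProduct_comm z xs]
      ring
    have ewk : ∀ k : Fin m, (z - t • xs) ⬝ᵥ H k *ᵥ (z - t • xs)
        = z ⬝ᵥ H k *ᵥ z - 2 * t * (xs ⬝ᵥ H k *ᵥ z) + t * t * (xs ⬝ᵥ H k *ᵥ xs) := by
      intro k
      rw [Matrix.mulVec_sub]
      simp only [sub_dotProduct, dotProduct_sub, smul_dotProduct,
        dotProduct_smul, Matrix.mulVec_smul, smul_eq_mul]
      rw [hsy k z xs]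
      ring
    rw [ew]
    simp only [ewk]
    rw [show ∑ k, lam k * (z ⬝ᵥ H k *ᵥ z + 2 * t * (b k ⬝ᵥ z) + t * t * β k)
        = ∑ k, lam k * (z ⬝ᵥ H k *ᵥ z) + 2 * t * ∑ k, lam k * (b k ⬝ᵥ z)
          + t * t * ∑ k, lam k * β k by
      rw [Finset.mul_sum, Finset.mul_sum, ← Finset.sum_add_distrib, ← Finset.sum_add_distrib]
      exact Finset.sum_congr rfl fun k _ => by ring]
    rw [show ∑ k, lam k * (z ⬝ᵥ H k *ᵥ z - 2 * t * (xs ⬝ᵥ H k *ᵥ z)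
          + t * t * (xs ⬝ᵥ H k *ᵥ xs))
        = ∑ k, lam k * (z ⬝ᵥ H k *ᵥ z) - 2 * t * ∑ k, lam k * (xs ⬝ᵥ H k *ᵥ z)
          + t * t * ∑ k, lam k * (xs ⬝ᵥ H k *ᵥ xs) by
      rw [Finset.mul_sum, Finset.mul_sum, ← Finset.sum_sub_distrib, ← Finset.sum_add_distrib]
      exact Finset.sum_congr rfl fun k _ => by ring]
    have H1 := h1 z
    have H2 := h1 xs
    rw [hgxs]
    linear_combination (2*t)*H1 + (t*t)*(h3 - 2*H2)
  -- M is hermitian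
  have hMherm : M.IsHermitian := by
    rw [Matrix.IsHermitian, Matrix.conjTranspose_eq_transpose_of_trivial]
    have hGs : G.IsSymm := by
      rw [hG]
      exact Matrix.IsSymm.fromBlocks (Matrix.isSymm_one) (by ext i j; rfl) (by ext i j; rfl)
    have hFs : ∀ k, (F k).IsSymm := fun k => by
      rw [hF k]
      exact Matrix.IsSymm.fromBlocks (hH k) (by ext i j; rfl) (by ext i j; rfl)
    have hEs : E.IsSymm := by
      rw [hE]
      exact Matrix.IsSymm.fromBlocks (by simp [Matrix.IsSymm]) (by simp) (Matrix.isSymm_one)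
    show Mᵀ = M
    rw [hM, Matrix.transpose_sub, Matrix.transpose_add, Matrix.transpose_sum,
      Matrix.transpose_smul, hGs.eq, hEs.eq]
    congr 1
    congr 1
    exact Finset.sum_congr rfl fun k _ => by rw [Matrix.transpose_smul, (hFs k).eq]
  -- M is positive semidefinite
  have hMpsd : M.PosSemidef := by
    refine Matrix.PosSemidef.of_dotProduct_mulVec_nonneg hMherm fun x => ?_
    have hxe : x = Sum.elim (fun i => x (Sum.inl i)) (fun _ : Unit => x (Sum.inr ())) := by
      funext i
      cases i with
      | inl i => rfl
      | inr u => cases u; rfl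
    have hsx : star x = x := by funext i; exact star_trivial _
    rw [hsx]
    rw [hxe, qM]
    have h := hpsd.dotProduct_mulVec_nonneg ((fun i => x (Sum.inl i)) - x (Sum.inr ()) • xs)
    have hsx2 : star ((fun i => x (Sum.inl i)) - x (Sum.inr ()) • xs)
        = (fun i => x (Sum.inl i)) - x (Sum.inr ()) • xs := by funext i; exact star_trivial _
    rwa [hsx2] at h
  constructor
  · -- membership via the rank-one matrix
    refine ⟨Matrix.vecMulVec (Sum.elim xs fun _ : Unit => (1:ℝ))
      (Sum.elim xs fun _ : Unit => (1:ℝ)), psd_vecMulVec _, ?_, ?_, ?_⟩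
    · intro k
      rw [trace_mul_vecMulVec, qF k xs 1]
      have h := hfeas k
      rw [hf] at h
      linarith
    · rw [trace_mul_vecMulVec, qE]; norm_num
    · rw [trace_mul_vecMulVec, qG, hgxs]; ring
  · -- lower bound
    rintro v ⟨Y, hY, hFk, hE1, rfl⟩
    have h0 : 0 ≤ (M * Y).trace := trace_mul_nonneg' hMpsd hY
    have hexp : (M * Y).trace
        = (G * Y).trace + ∑ k, lam k * (F k * Y).trace - g xs * (E * Y).trace := by
      rw [hM, Matrix.sub_mul, Matrix.add_mul, Finset.sum_mul]
      rw [Matrix.trace_sub, Matrix.trace_add, Matrix.trace_sum]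
      simp only [Matrix.smul_mul, Matrix.trace_smul, smul_eq_mul]
    rw [hexp, hE1] at h0
    have hz : ∑ k, lam k * (F k * Y).trace = 0 := by
      simp [hFk]
    rw [hz] at h0
    linarith
end

section
/- Conversely, if the SDP relaxation is exact, i.e. there exist dual-optimal λ_k, ρ with G + ∑ λ_k F_k − ρ E ⪰ 0 and ρ = g(x*) where x* is a constrained minimizer of g over {f_k = 0}, then those λ_k satisfy ∇g(x*) + ∑ λ_k ∇f_k(x*) = 0 and I + ∑ λ_k H_k ⪰ 0. -/
open Matrix

lemma quad_nonneg_key {n : ℕ} (A : Matrix (Fin n) (Fin n) ℝ) (hA : A.IsSymm)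
    (c : Fin n → ℝ) (d : ℝ) (xs : Fin n → ℝ)
    (hQ : ∀ x, 0 ≤ x ⬝ᵥ A.mulVec x + 2 * (c ⬝ᵥ x) + d)
    (h0 : xs ⬝ᵥ A.mulVec xs + 2 * (c ⬝ᵥ xs) + d = 0) :
    A.mulVec xs + c = 0 ∧ A.PosSemidef := by
  have hsym : ∀ u v : Fin n → ℝ, u ⬝ᵥ A.mulVec v = v ⬝ᵥ A.mulVec u := by
    intro u v
    rw [dotProduct_mulVec, ← mulVec_transpose, hA.eq, dotProduct_comm]
  have hlin : ∀ (u : Fin n → ℝ) (t : ℝ),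
      0 ≤ t ^ 2 * (u ⬝ᵥ A.mulVec u) + 2 * t * (u ⬝ᵥ (A.mulVec xs + c)) := by
    intro u t
    have h := hQ (xs + t • u)
    have hexp : (xs + t • u) ⬝ᵥ A.mulVec (xs + t • u) + 2 * (c ⬝ᵥ (xs + t • u)) + d
        = (xs ⬝ᵥ A.mulVec xs + 2 * (c ⬝ᵥ xs) + d)
          + (t ^ 2 * (u ⬝ᵥ A.mulVec u) + 2 * t * (u ⬝ᵥ (A.mulVec xs + c))) := by
      have hs := hsym u xs
      have hc := dotProduct_comm u c
      simp only [mulVec_add, mulVec_smul, dotProduct_add, add_dotProduct,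
        dotProduct_smul, smul_dotProduct, smul_eq_mul]
      rw [hs, hc]
      ring
    rw [hexp, h0, zero_add] at h
    exact h
  have hpos : ∀ u : Fin n → ℝ, 0 ≤ u ⬝ᵥ A.mulVec u := by
    intro u
    have h1 := hlin u 1
    have h2 := hlin u (-1)
    nlinarith
  have hzero : ∀ u : Fin n → ℝ, u ⬝ᵥ (A.mulVec xs + c) = 0 := by
    intro u
    set α := u ⬝ᵥ A.mulVec u with hα
    set B := u ⬝ᵥ (A.mulVec xs + c) with hB
    have hαnn : 0 ≤ α := hpos u
    have hα1 : 0 < α + 1 := by linarith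
    set δ := 1 / (α + 1) with hδ
    have hδpos : 0 < δ := by positivity
    have hαδ : α * δ < 1 := by
      rw [hδ, mul_one_div]
      exact (div_lt_one hα1).mpr (by linarith)
    have key : 0 ≤ (-(B * δ)) ^ 2 * α + 2 * (-(B * δ)) * B := hlin u (-(B * δ))
    have hBsq : B ^ 2 ≤ 0 := by
      nlinarith [key, hαδ, hδpos, mul_nonneg (sq_nonneg B) hδpos.le]
    have : B ^ 2 = 0 := le_antisymm hBsq (sq_nonneg B)
    exact pow_eq_zero_iff two_ne_zero |>.mp this
  constructor
  · have := hzero (A.mulVec xs + c)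
    exact dotProduct_self_eq_zero.mp this
  · refine PosSemidef.of_dotProduct_mulVec_nonneg ?_ ?_
    · rw [Matrix.IsHermitian, conjTranspose_eq_transpose_of_trivial]
      exact hA
    · intro x
      simpa using hpos x

lemma qform_blocks {n : ℕ} (M : Matrix (Fin n) (Fin n) ℝ) (u w : Fin n → ℝ)
    (γ : ℝ) (x : Fin n → ℝ) :
    Sum.elim x (fun _ : Unit => (1:ℝ)) ⬝ᵥ
      (Matrix.fromBlocks M (Matrix.of fun i (_ : Unit) => u i)
        (Matrix.of fun (_ : Unit) j => w j)
        (Matrix.of fun (_ : Unit) (_ : Unit) => γ)) *ᵥ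
      Sum.elim x (fun _ : Unit => (1:ℝ))
    = x ⬝ᵥ M *ᵥ x + x ⬝ᵥ u + w ⬝ᵥ x + γ := by
  rw [fromBlocks_mulVec, sumElim_dotProduct_sumElim, dotProduct_add, dotProduct_add]
  have h1 : x ⬝ᵥ ((Matrix.of fun i (_ : Unit) => u i) *ᵥ fun _ => (1:ℝ)) = x ⬝ᵥ u := by
    congr 1
    ext i
    simp [mulVec, dotProduct]
  have h2 : (fun _ : Unit => (1:ℝ)) ⬝ᵥ ((Matrix.of fun (_ : Unit) j => w j) *ᵥ x)
      = w ⬝ᵥ x := by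
    simp [mulVec, dotProduct]
  have h3 : (fun _ : Unit => (1:ℝ)) ⬝ᵥ
      ((Matrix.of fun (_ : Unit) (_ : Unit) => γ) *ᵥ fun _ => (1:ℝ)) = γ := by
    simp [mulVec, dotProduct]
  simp only [Sum.elim_comp_inl, Sum.elim_comp_inr] at *
  rw [h1, h2, h3]
  ring

theorem certificate_of_sdp_exact
    (n m : ℕ) (xhat : Fin n → ℝ)
    (H : Fin m → Matrix (Fin n) (Fin n) ℝ)
    (b : Fin m → Fin n → ℝ) (β : Fin m → ℝ)
    (hH : ∀ k, (H k).IsSymm)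
    (g : (Fin n → ℝ) → ℝ) (f : Fin m → (Fin n → ℝ) → ℝ)
    (hg : ∀ x, g x = (x - xhat) ⬝ᵥ (x - xhat))
    (hf : ∀ k x, f k x = x ⬝ᵥ (H k).mulVec x + 2 * (b k ⬝ᵥ x) + β k)
    (G : Matrix (Fin n ⊕ Unit) (Fin n ⊕ Unit) ℝ)
    (F : Fin m → Matrix (Fin n ⊕ Unit) (Fin n ⊕ Unit) ℝ)
    (E : Matrix (Fin n ⊕ Unit) (Fin n ⊕ Unit) ℝ)
    (hG : G = Matrix.fromBlocks 1
      (Matrix.of fun i (_ : Unit) => -xhat i)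
      (Matrix.of fun (_ : Unit) j => -xhat j)
      (Matrix.of fun _ _ => xhat ⬝ᵥ xhat))
    (hF : ∀ k, F k = Matrix.fromBlocks (H k)
      (Matrix.of fun i (_ : Unit) => b k i)
      (Matrix.of fun (_ : Unit) j => b k j)
      (Matrix.of fun _ _ => β k))
    (hE : E = Matrix.fromBlocks 0 0 0 1)
    (xs : Fin n → ℝ) (lam : Fin m → ℝ) (ρ : ℝ)
    (hfeas : ∀ k, f k xs = 0)
    (hmin : ∀ x : Fin n → ℝ, (∀ k, f k x = 0) → g xs ≤ g x)
    (hρ : ρ = g xs)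
    (hdual : (G + ∑ k, lam k • F k - ρ • E).PosSemidef) :
    (xs - xhat) + ∑ k, lam k • ((H k).mulVec xs + b k) = 0 ∧
    ((1 : Matrix (Fin n) (Fin n) ℝ) + ∑ k, lam k • H k).PosSemidef := by
  set A : Matrix (Fin n) (Fin n) ℝ := 1 + ∑ k, lam k • H k with hAdef
  set c : Fin n → ℝ := (∑ k, lam k • b k) - xhat with hcdef
  set d : ℝ := xhat ⬝ᵥ xhat + ∑ k, lam k * β k - ρ with hddef
  -- helper: linearity of mulVec / dotProduct over finite sums
  have mvsum : ∀ (M : Fin m → Matrix (Fin n) (Fin n) ℝ) (x : Fin n → ℝ),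
      (∑ k, M k) *ᵥ x = ∑ k, M k *ᵥ x := fun M x =>
    map_sum (mulVec.addMonoidHomLeft x) M Finset.univ
  have mvsum' : ∀ (M : Fin m → Matrix (Fin n ⊕ Unit) (Fin n ⊕ Unit) ℝ)
      (x : Fin n ⊕ Unit → ℝ), (∑ k, M k) *ᵥ x = ∑ k, M k *ᵥ x := fun M x =>
    map_sum (mulVec.addMonoidHomLeft x) M Finset.univ
  have dpsum : ∀ {ι : Type} [Fintype ι] (x : ι → ℝ) (w : Fin m → ι → ℝ),
      x ⬝ᵥ (∑ k, w k) = ∑ k, x ⬝ᵥ w k := by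
    intro ι _ x w
    simp only [dotProduct, Finset.sum_apply, Finset.mul_sum]
    rw [Finset.sum_comm]
  have hA : A.IsSymm := by
    rw [hAdef, Matrix.IsSymm, transpose_add, transpose_one, transpose_sum]
    congr 1
    refine Finset.sum_congr rfl fun k _ => ?_
    rw [transpose_smul, (hH k).eq]
  -- quadratic form computations
  set v : (Fin n → ℝ) → (Fin n ⊕ Unit → ℝ) := fun x => Sum.elim x (fun _ => 1)
    with hvdef
  have hqG : ∀ x, v x ⬝ᵥ G *ᵥ v x
      = x ⬝ᵥ x - 2 * (xhat ⬝ᵥ x) + xhat ⬝ᵥ xhat := by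
    intro x
    rw [hvdef, hG]
    have : (fun i => -xhat i) = -xhat := rfl
    rw [show (Matrix.of fun i (_ : Unit) => -xhat i)
        = Matrix.of fun i (_ : Unit) => (-xhat) i from rfl,
      show (Matrix.of fun (_ : Unit) j => -xhat j)
        = Matrix.of fun (_ : Unit) j => (-xhat) j from rfl,
      show (Matrix.of fun (_ : Unit) (_ : Unit) => xhat ⬝ᵥ xhat)
        = Matrix.of fun (_ : Unit) (_ : Unit) => (xhat ⬝ᵥ xhat) from rfl]
    rw [qform_blocks, one_mulVec, dotProduct_neg, neg_dotProduct,
      dotProduct_comm x xhat]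
    ring
  have hqF : ∀ k x, v x ⬝ᵥ F k *ᵥ v x
      = x ⬝ᵥ (H k) *ᵥ x + 2 * (b k ⬝ᵥ x) + β k := by
    intro k x
    rw [hvdef, hF, qform_blocks, dotProduct_comm x (b k)]
    ring
  have hqE : ∀ x, v x ⬝ᵥ E *ᵥ v x = 1 := by
    intro x
    rw [hvdef, hE]
    have h0' : (0 : Matrix (Fin n) Unit ℝ) = Matrix.of fun i (_ : Unit) => (0:ℝ) := rfl
    have h0'' : (0 : Matrix Unit (Fin n) ℝ) = Matrix.of fun (_ : Unit) j => (0:ℝ) := rfl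
    have h1' : (1 : Matrix Unit Unit ℝ)
        = Matrix.of fun (_ : Unit) (_ : Unit) => (1:ℝ) := by
      ext i j
      simp [Matrix.one_apply, Subsingleton.elim i j]
    rw [h0', h0'', h1',
      show (Matrix.of fun i (_ : Unit) => (0:ℝ))
        = Matrix.of fun i (_ : Unit) => (fun _ => (0:ℝ)) i from rfl,
      show (Matrix.of fun (_ : Unit) j => (0:ℝ))
        = Matrix.of fun (_ : Unit) j => (fun _ => (0:ℝ)) j from rfl,
      qform_blocks]
    simp
  have hqform : ∀ x, v x ⬝ᵥ (G + ∑ k, lam k • F k - ρ • E) *ᵥ v x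
      = (x ⬝ᵥ x - 2 * (xhat ⬝ᵥ x) + xhat ⬝ᵥ xhat)
        + (∑ k, lam k * (x ⬝ᵥ (H k) *ᵥ x + 2 * (b k ⬝ᵥ x) + β k)) - ρ := by
    intro x
    rw [sub_mulVec, add_mulVec, mvsum', dotProduct_sub, dotProduct_add, dpsum,
      smul_mulVec, dotProduct_smul, hqG, hqE]
    congr 2
    refine Finset.sum_congr rfl fun k _ => ?_
    rw [smul_mulVec, dotProduct_smul, hqF, smul_eq_mul]
    ring_nf
  -- identity between the two quadratic expressions
  have hid : ∀ x, x ⬝ᵥ A *ᵥ x + 2 * (c ⬝ᵥ x) + d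
      = (x ⬝ᵥ x - 2 * (xhat ⬝ᵥ x) + xhat ⬝ᵥ xhat)
        + (∑ k, lam k * (x ⬝ᵥ (H k) *ᵥ x + 2 * (b k ⬝ᵥ x) + β k)) - ρ := by
    intro x
    have e1 : x ⬝ᵥ A *ᵥ x = x ⬝ᵥ x + ∑ k, lam k * (x ⬝ᵥ (H k) *ᵥ x) := by
      rw [hAdef, add_mulVec, one_mulVec, dotProduct_add, mvsum, dpsum]
      congr 1
      exact Finset.sum_congr rfl fun k _ => by
        rw [smul_mulVec, dotProduct_smul, smul_eq_mul]
    have e2 : c ⬝ᵥ x = (∑ k, lam k * (b k ⬝ᵥ x)) - xhat ⬝ᵥ x := by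
      rw [hcdef, sub_dotProduct]
      congr 1
      rw [dotProduct_comm, dpsum]
      exact Finset.sum_congr rfl fun k _ => by
        rw [dotProduct_smul, smul_eq_mul, dotProduct_comm]
    rw [e1, e2, hddef]
    have e3 : ∑ k, lam k * (x ⬝ᵥ (H k) *ᵥ x + 2 * (b k ⬝ᵥ x) + β k)
        = ∑ k, (lam k * (x ⬝ᵥ (H k) *ᵥ x) + 2 * (lam k * (b k ⬝ᵥ x))
            + lam k * β k) := Finset.sum_congr rfl fun k _ => by ring
    rw [e3, Finset.sum_add_distrib, Finset.sum_add_distrib, ← Finset.mul_sum]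
    ring
  have hQ : ∀ x, 0 ≤ x ⬝ᵥ A *ᵥ x + 2 * (c ⬝ᵥ x) + d := by
    intro x
    have h := hdual.dotProduct_mulVec_nonneg (v x)
    rw [star_trivial, hqform x] at h
    rw [hid x]
    exact h
  have h0 : xs ⬝ᵥ A *ᵥ xs + 2 * (c ⬝ᵥ xs) + d = 0 := by
    rw [hid xs]
    have e4 : ∑ k, lam k * (xs ⬝ᵥ (H k) *ᵥ xs + 2 * (b k ⬝ᵥ xs) + β k)
        = ∑ k, lam k * f k xs := Finset.sum_congr rfl fun k _ => by rw [hf k xs]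
    have e5 : xs ⬝ᵥ xs - 2 * (xhat ⬝ᵥ xs) + xhat ⬝ᵥ xhat = g xs := by
      rw [hg xs]
      simp [sub_dotProduct, dotProduct_sub, dotProduct_comm xhat xs]
      ring
    rw [e4, e5, hρ]
    simp [hfeas]
  obtain ⟨h1, h2⟩ := quad_nonneg_key A hA c d xs hQ h0
  constructor
  · rw [← h1, hAdef, hcdef, add_mulVec, one_mulVec, mvsum]
    simp only [smul_add, smul_mulVec, Finset.sum_add_distrib]
    abel
  · exact h2
end

section
/- Let Y* be optimal for the primal SDP (min ⟨G,Y⟩ s.t. ⟨F_k,Y⟩ = 0, ⟨E,Y⟩ = 1, Y ⪰ 0) and (λ*, ρ*) optimal for its dual, satisfying complementary slackness ⟨G + ∑ λ*_k F_k − ρ* E, Y*⟩ = 0. If the top-left n×n block I + ∑ λ*_k H_k of the dual slack matrix is positive definite, then rank(Y*) = 1. -/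
open Matrix

lemma eq_zero_of_trace_conjTranspose_mul_self_eq_zero
    {m' n' : Type*} [Fintype m'] [Fintype n'] {M : Matrix m' n' ℝ}
    (h : Matrix.trace (Mᴴ * M) = 0) : M = 0 := by
  have hdiag : ∀ j : n', (Mᴴ * M) j j = 0 := by
    have hnn : ∀ j : n', 0 ≤ (Mᴴ * M) j j := by
      intro j
      simp only [Matrix.mul_apply, Matrix.conjTranspose_apply, star_trivial]
      exact Finset.sum_nonneg fun i _ => mul_self_nonneg _
    intro j
    have := (Finset.sum_eq_zero_iff_of_nonneg (fun i _ => hnn i)).mp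
      (by simpa [Matrix.trace] using h)
    exact this j (Finset.mem_univ j)
  ext i j
  have hj := hdiag j
  have : (fun i => M i j) = 0 := by
    apply dotProduct_star_self_eq_zero.mp
    simpa [Matrix.mul_apply, Matrix.conjTranspose_apply, dotProduct] using hj
  simpa using congr_fun this i

theorem rank_one_of_strict_dual_block
    (n m : ℕ) (xhat : Fin n → ℝ)
    (H : Fin m → Matrix (Fin n) (Fin n) ℝ)
    (b : Fin m → Fin n → ℝ) (β : Fin m → ℝ)
    (hH : ∀ k, (H k).IsSymm)
    (G : Matrix (Fin n ⊕ Unit) (Fin n ⊕ Unit) ℝ)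
    (F : Fin m → Matrix (Fin n ⊕ Unit) (Fin n ⊕ Unit) ℝ)
    (E : Matrix (Fin n ⊕ Unit) (Fin n ⊕ Unit) ℝ)
    (hG : G = Matrix.fromBlocks 1
      (Matrix.of fun i (_ : Unit) => -xhat i)
      (Matrix.of fun (_ : Unit) j => -xhat j)
      (Matrix.of fun _ _ => xhat ⬝ᵥ xhat))
    (hF : ∀ k, F k = Matrix.fromBlocks (H k)
      (Matrix.of fun i (_ : Unit) => b k i)
      (Matrix.of fun (_ : Unit) j => b k j)
      (Matrix.of fun _ _ => β k))
    (hE : E = Matrix.fromBlocks 0 0 0 1)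
    (Y : Matrix (Fin n ⊕ Unit) (Fin n ⊕ Unit) ℝ)
    (lam : Fin m → ℝ) (ρ : ℝ)
    (hY : Y.PosSemidef)
    (hYfeas : ∀ k, Matrix.trace (F k * Y) = 0)
    (hYE : Matrix.trace (E * Y) = 1)
    (hdual : (G + ∑ k, lam k • F k - ρ • E).PosSemidef)
    (hcs : Matrix.trace ((G + ∑ k, lam k • F k - ρ • E) * Y) = 0)
    (hpd : ((1 : Matrix (Fin n) (Fin n) ℝ) + ∑ k, lam k • H k).PosDef) :
    Y.rank = 1 := by
  set S := G + ∑ k, lam k • F k - ρ • E with hS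
  -- S * Y = 0
  obtain ⟨A, hA⟩ : ∃ A : Matrix (Fin n ⊕ Unit) (Fin n ⊕ Unit) ℝ, S = Aᴴ * A := by
    open scoped Matrix.Norms.L2Operator MatrixOrder in
    exact CStarAlgebra.nonneg_iff_eq_star_mul_self.mp hdual.nonneg
  obtain ⟨B, hB⟩ : ∃ B : Matrix (Fin n ⊕ Unit) (Fin n ⊕ Unit) ℝ, Y = Bᴴ * B := by
    open scoped Matrix.Norms.L2Operator MatrixOrder in
    exact CStarAlgebra.nonneg_iff_eq_star_mul_self.mp hY.nonneg
  have hABt : A * Bᴴ = 0 := by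
    apply eq_zero_of_trace_conjTranspose_mul_self_eq_zero
    have : (A * Bᴴ)ᴴ * (A * Bᴴ) = B * ((Aᴴ * A) * Bᴴ) := by
      simp [Matrix.conjTranspose_mul, Matrix.mul_assoc]
    rw [this, Matrix.trace_mul_comm, Matrix.mul_assoc, ← hA, ← hB]
    exact hcs
  have hSY : S * Y = 0 := by
    rw [hA, hB]
    calc Aᴴ * A * (Bᴴ * B) = Aᴴ * (A * Bᴴ) * B := by
          simp [Matrix.mul_assoc]
      _ = 0 := by rw [hABt]; simp
  -- Y ≠ 0
  have hYne : Y ≠ 0 := by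
    intro h
    rw [h] at hYE
    simp at hYE
  -- range Y ⊆ ker S
  have hle : LinearMap.range Y.mulVecLin ≤ LinearMap.ker S.mulVecLin := by
    rintro _ ⟨x, rfl⟩
    simp only [LinearMap.mem_ker, Matrix.mulVecLin_apply]
    rw [Matrix.mulVec_mulVec, hSY]
    simp
  -- the top-left block of S
  have hblock : ∀ i j, S (Sum.inl i) (Sum.inl j) =
      ((1 : Matrix (Fin n) (Fin n) ℝ) + ∑ k, lam k • H k) i j := by
    intro i j
    simp [hS, hG, hF, hE, Matrix.sum_apply, Matrix.add_apply, Matrix.sub_apply,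
      Matrix.smul_apply, Matrix.fromBlocks, Matrix.one_apply]
  -- kernel of S has dimension ≤ 1
  have hker : Module.finrank ℝ (LinearMap.ker S.mulVecLin) ≤ 1 := by
    have hinj : Function.Injective
        ((LinearMap.proj (Sum.inr () : Fin n ⊕ Unit)).comp
          (LinearMap.ker S.mulVecLin).subtype) := by
      rw [← LinearMap.ker_eq_bot, LinearMap.ker_eq_bot']
      rintro ⟨v, hv⟩ hv0
      have hvr : v (Sum.inr ()) = 0 := hv0
      have hSv : S.mulVec v = 0 := hv
      -- the top part u of v satisfies (1 + ∑ λ H) u = 0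
      set u : Fin n → ℝ := fun i => v (Sum.inl i) with hu
      have hMu : ((1 : Matrix (Fin n) (Fin n) ℝ) + ∑ k, lam k • H k).mulVec u = 0 := by
        funext i
        have := congr_fun hSv (Sum.inl i)
        simp only [Matrix.mulVec, dotProduct, Fintype.sum_sum_type,
          Finset.univ_unique, Finset.sum_singleton, Pi.zero_apply] at this ⊢
        rw [show (default : Unit) = () from rfl, hvr, mul_zero, add_zero] at this
        rw [← this]
        exact Finset.sum_congr rfl fun j _ => by rw [hblock i j]
      have hu0 : u = 0 := by
        by_contra hne
        have := hpd.dotProduct_mulVec_pos (x := u) hne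
        rw [hMu] at this
        simp at this
      ext x
      cases x with
      | inl i => exact congr_fun hu0 i
      | inr u' => cases u'; exact hvr
    calc Module.finrank ℝ (LinearMap.ker S.mulVecLin)
        ≤ Module.finrank ℝ ℝ := LinearMap.finrank_le_finrank_of_injective hinj
      _ = 1 := Module.finrank_self ℝ
  have hrank_le : Y.rank ≤ 1 := by
    rw [Matrix.rank]
    exact le_trans (Submodule.finrank_mono hle) hker
  have hrank_pos : Y.rank ≠ 0 := by
    intro h0
    apply hYne
    have hbot : LinearMap.range Y.mulVecLin = ⊥ :=
      Submodule.finrank_eq_zero.mp h0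
    rw [LinearMap.range_eq_bot] at hbot
    ext i j
    have := congr_fun (LinearMap.congr_fun hbot (Pi.single j 1)) i
    simpa [Matrix.mulVec_single] using this
  omega
end
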